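/- A function f satisfies the Functional (L_A, L_B) Inequality with uniform weights for all n if and only if it satisfies the weighted version: for all n ≥ 1, x, u₁, ..., uₙ ∈ ℝ^d, and all nonnegative weights β₁, ..., βₙ summing to 1, ‖∑ᵢ βᵢ(∇f(x+uᵢ) - ∇f(x))‖² ≤ L_A² ∑ᵢ βᵢ ‖uᵢ‖² + L_B² ‖∑ᵢ βᵢ uᵢ‖². -/

import Mathlib

open scoped BigOperators
open Filter

section Aux

variable {E : Type*} [AddCommMonoid E]

/-- Replication: summing a function over `Fin (∑ k i)` via a sigma-type equivalence. -/
lemma rep_sum {n : ℕ} (k : Fin n → ℕ) (g : Fin n → E) :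
    ∑ j : Fin (Fintype.card ((i : Fin n) × Fin (k i))),
        g (((Fintype.equivFin ((i : Fin n) × Fin (k i))).symm j).1)
      = ∑ i, k i • g i := by
  rw [Equiv.sum_comp (Fintype.equivFin ((i : Fin n) × Fin (k i))).symm
    (fun p => g p.1)]
  rw [← Finset.univ_sigma_univ, Finset.sum_sigma]
  simp

lemma card_sigma_fin {n : ℕ} (k : Fin n → ℕ) :
    Fintype.card ((i : Fin n) × Fin (k i)) = ∑ i, k i := by
  simp [Fintype.card_sigma]

end Aux

theorem stmt6 (d : ℕ) (f : EuclideanSpace ℝ (Fin d) → ℝ) (LA LB : ℝ)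
    (hdiff : Differentiable ℝ f) :
    (∀ (n : ℕ), 1 ≤ n → ∀ (x : EuclideanSpace ℝ (Fin d))
        (u : Fin n → EuclideanSpace ℝ (Fin d)),
        ‖(n : ℝ)⁻¹ • ∑ i, (gradient f (x + u i) - gradient f x)‖ ^ 2
          ≤ LA ^ 2 * ((n : ℝ)⁻¹ * ∑ i, ‖u i‖ ^ 2)
            + LB ^ 2 * ‖(n : ℝ)⁻¹ • ∑ i, u i‖ ^ 2)
    ↔ (∀ (n : ℕ), 1 ≤ n → ∀ (x : EuclideanSpace ℝ (Fin d))
        (u : Fin n → EuclideanSpace ℝ (Fin d)) (β : Fin n → ℝ),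
        (∀ i, 0 ≤ β i) → (∑ i, β i = 1) →
        ‖∑ i, β i • (gradient f (x + u i) - gradient f x)‖ ^ 2
          ≤ LA ^ 2 * (∑ i, β i * ‖u i‖ ^ 2)
            + LB ^ 2 * ‖∑ i, β i • u i‖ ^ 2) := by
  constructor
  · intro h n hn x u β hβ0 hβ1
    set F : Fin n → EuclideanSpace ℝ (Fin d) :=
      fun i => gradient f (x + u i) - gradient f x with hF
    -- rational-like approximation of the weights
    set k : ℕ → Fin n → ℕ := fun N i => ⌊(N : ℝ) * β i⌋₊ + 1 with hk
    set K : ℕ → ℕ := fun N => ∑ i, k N i with hK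
    have hKpos : ∀ N, 0 < K N := by
      intro N
      have : (0:ℕ) < n := hn
      exact Finset.sum_pos (fun i _ => Nat.succ_pos _) (by simpa using Finset.univ_nonempty_iff.2 ⟨⟨0, this⟩⟩)
    set w : ℕ → Fin n → ℝ := fun N i => (k N i : ℝ) / (K N : ℝ) with hw
    -- Step 1: the inequality holds for the weights w N
    have step1 : ∀ N, ‖∑ i, w N i • F i‖ ^ 2
        ≤ LA ^ 2 * (∑ i, w N i * ‖u i‖ ^ 2) + LB ^ 2 * ‖∑ i, w N i • u i‖ ^ 2 := by
      intro N
      set σ := (i : Fin n) × Fin (k N i)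
      set M := Fintype.card σ with hM
      have hMK : M = K N := card_sigma_fin (k N)
      have hM1 : 1 ≤ M := by rw [hMK]; exact hKpos N
      set u' : Fin M → EuclideanSpace ℝ (Fin d) := fun j => u (((Fintype.equivFin σ).symm j).1) with hu'
      have key := h M hM1 x u'
      have e1 : ∑ j, (gradient f (x + u' j) - gradient f x) = ∑ i, (k N i) • F i := by
        exact rep_sum (k N) F
      have e2 : ∑ j, u' j = ∑ i, (k N i) • u i := rep_sum (k N) u
      have e3 : ∑ j, ‖u' j‖ ^ 2 = ∑ i, (k N i) • ‖u i‖ ^ 2 :=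
        rep_sum (k N) (fun i => ‖u i‖ ^ 2)
      rw [e1, e2, e3] at key
      have hMne : ((M : ℝ)) ≠ 0 := by positivity
      have hsm : ∀ (v : Fin n → EuclideanSpace ℝ (Fin d)), (M : ℝ)⁻¹ • ∑ i, (k N i) • v i = ∑ i, w N i • v i := by
        intro v
        rw [Finset.smul_sum]
        refine Finset.sum_congr rfl (fun i _ => ?_)
        rw [← Nat.cast_smul_eq_nsmul ℝ, smul_smul, hw, hMK]
        simp [div_eq_inv_mul]
      have hsc : (M : ℝ)⁻¹ * ∑ i, (k N i) • ‖u i‖ ^ 2 = ∑ i, w N i * ‖u i‖ ^ 2 := by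
        rw [Finset.mul_sum]
        refine Finset.sum_congr rfl (fun i _ => ?_)
        rw [nsmul_eq_mul, hw, hMK]
        ring
      rw [hsm F, hsm u, hsc] at key
      exact key
    -- Step 2: w N i → β i
    have hklb : ∀ N : ℕ, ∀ i, (N : ℝ) * β i ≤ (k N i : ℝ) := by
      intro N i
      have := Nat.lt_floor_add_one ((N : ℝ) * β i)
      push_cast [hk]
      linarith
    have hkub : ∀ N : ℕ, ∀ i, (k N i : ℝ) ≤ (N : ℝ) * β i + 1 := by
      intro N i
      have hnn : 0 ≤ (N : ℝ) * β i := mul_nonneg (Nat.cast_nonneg N) (hβ0 i)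
      have := Nat.floor_le hnn
      push_cast [hk]
      linarith
    have hdivN : ∀ i, Tendsto (fun N : ℕ => (k N i : ℝ) / N) atTop (nhds (β i)) := by
      intro i
      have hlo : ∀ᶠ N : ℕ in atTop, β i ≤ (k N i : ℝ) / N := by
        filter_upwards [eventually_ge_atTop 1] with N hN
        have hNpos : (0:ℝ) < N := by exact_mod_cast hN
        rw [le_div_iff₀ hNpos]
        have := hklb N i
        linarith
      have hhi : ∀ᶠ N : ℕ in atTop, (k N i : ℝ) / N ≤ β i + 1 / N := by
        filter_upwards [eventually_ge_atTop 1] with N hN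
        have hNpos : (0:ℝ) < N := by exact_mod_cast hN
        rw [div_le_iff₀ hNpos]
        have := hkub N i
        have : (k N i : ℝ) ≤ N * β i + 1 := this
        calc (k N i : ℝ) ≤ N * β i + 1 := this
          _ = (β i + 1 / N) * N := by field_simp
      have h2 : Tendsto (fun N : ℕ => β i + 1 / (N:ℝ)) atTop (nhds (β i)) := by
        have := tendsto_one_div_atTop_nhds_zero_nat (𝕜 := ℝ)
        simpa using tendsto_const_nhds.add this
      exact tendsto_of_tendsto_of_tendsto_of_le_of_le' tendsto_const_nhds h2 hlo hhi
    have hKN : Tendsto (fun N : ℕ => (K N : ℝ) / N) atTop (nhds 1) := by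
      have : Tendsto (fun N : ℕ => ∑ i, (k N i : ℝ) / N) atTop (nhds (∑ i, β i)) :=
        tendsto_finset_sum _ (fun i _ => hdivN i)
      rw [hβ1] at this
      refine this.congr (fun N => ?_)
      simp [hK, Finset.sum_div]
    have hwlim : ∀ i, Tendsto (fun N => w N i) atTop (nhds (β i)) := by
      intro i
      have := (hdivN i).div hKN one_ne_zero
      simp only [div_one] at this
      refine this.congr' ?_
      filter_upwards [eventually_ge_atTop 1] with N hN
      have hNne : ((N:ℝ)) ≠ 0 := by
        have : (0:ℝ) < N := by exact_mod_cast hN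
        linarith
      have hKne : ((K N : ℝ)) ≠ 0 := by
        have := hKpos N
        positivity
      simp only [Pi.div_apply, hw]
      field_simp [hw]
      all_goals ring
    -- Step 3: pass to the limit
    have hL : Tendsto (fun N => ‖∑ i, w N i • F i‖ ^ 2) atTop
        (nhds (‖∑ i, β i • F i‖ ^ 2)) := by
      have : Tendsto (fun N => ∑ i, w N i • F i) atTop (nhds (∑ i, β i • F i)) :=
        tendsto_finset_sum _ (fun i _ => (hwlim i).smul_const (F i))
      exact (this.norm).pow 2
    have hR : Tendsto (fun N => LA ^ 2 * (∑ i, w N i * ‖u i‖ ^ 2)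
        + LB ^ 2 * ‖∑ i, w N i • u i‖ ^ 2) atTop
        (nhds (LA ^ 2 * (∑ i, β i * ‖u i‖ ^ 2) + LB ^ 2 * ‖∑ i, β i • u i‖ ^ 2)) := by
      have h1 : Tendsto (fun N => ∑ i, w N i * ‖u i‖ ^ 2) atTop
          (nhds (∑ i, β i * ‖u i‖ ^ 2)) :=
        tendsto_finset_sum _ (fun i _ => (hwlim i).mul_const _)
      have h2 : Tendsto (fun N => ∑ i, w N i • u i) atTop (nhds (∑ i, β i • u i)) :=
        tendsto_finset_sum _ (fun i _ => (hwlim i).smul_const (u i))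
      exact (tendsto_const_nhds.mul h1).add (tendsto_const_nhds.mul ((h2.norm).pow 2))
    simpa only [hF] using le_of_tendsto_of_tendsto' hL hR step1
  · intro h n hn x u
    have hne : ((n:ℝ)) ≠ 0 := by
      have : (0:ℕ) < n := hn
      positivity
    have := h n hn x u (fun _ => (n : ℝ)⁻¹)
      (fun i => by positivity)
      (by simp [Finset.sum_const, Finset.card_fin]; field_simp)
    rw [Finset.smul_sum, Finset.mul_sum, Finset.smul_sum]
    exact this
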